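/- Let Y be a subset of the finite set X. Any word over T that is a permutator of Y factors uniquely as a concatenation of minimal permutator words of Y: if w₁w₂…w_k = w′₁w′₂…w′_ℓ where all w_i and w′_j belong to M(Y), then k = ℓ and w_i = w′_i for all i. -/

import Mathlib

/-- Realization of a word (list of generators), applied left to right. -/
def realize {X : Type*} (w : List (X → X)) : X → X :=
  fun x => w.foldl (fun a f => f a) x

/-- `w` is a word over the generator set `T`: a nonempty list of elements of `T`. -/
def IsWordOver {X : Type*} (T : Finset (X → X)) (w : List (X → X)) : Prop :=
  w ≠ [] ∧ ∀ f ∈ w, f ∈ T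

/-- A word is straight if no nonempty proper prefix realizes the identity, and distinct
nonempty prefixes realize distinct transformations. -/
def IsStraight {X : Type*} (w : List (X → X)) : Prop :=
  (∀ k, 1 ≤ k → k < w.length → realize (w.take k) ≠ id) ∧
  (∀ k l, 1 ≤ k → k ≤ w.length → 1 ≤ l → l ≤ w.length →
    realize (w.take k) = realize (w.take l) → k = l)

/-- The semigroup generated by `T`: all transformations realized by nonempty words over `T`. -/
def SgpGen {X : Type*} (T : Finset (X → X)) : Set (X → X) :=
  {s | ∃ w : List (X → X), IsWordOver T w ∧ realize w = s}

/-- A permutator word of `Y`: a word over `T` whose realization maps `Y` onto `Y`. -/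
def Permutator {X : Type*} (T : Finset (X → X)) (Y : Set X) (w : List (X → X)) : Prop :=
  IsWordOver T w ∧ realize w '' Y = Y

/-- A minimal permutator word of `Y`: a permutator word not factorizable into two
permutator words. -/
def MinPermutator {X : Type*} (T : Finset (X → X)) (Y : Set X) (w : List (X → X)) : Prop :=
  Permutator T Y w ∧ ¬ ∃ u v, w = u ++ v ∧ Permutator T Y u ∧ Permutator T Y v

/-- The full permutator semigroup `Perm(Y)` of elements of `⟨T⟩` mapping `Y` onto `Y`. -/
def PermSet {X : Type*} (T : Finset (X → X)) (Y : Set X) : Set (X → X) :=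
  {s | s ∈ SgpGen T ∧ s '' Y = Y}

lemma realize_append {X : Type*} (u v : List (X → X)) :
    realize (u ++ v) = realize v ∘ realize u := by
  funext x; simp [realize, List.foldl_append]

lemma perm_of_perm_append {X : Type*} {T : Finset (X → X)} {Y : Set X}
    {a c : List (X → X)} (ha : Permutator T Y a) (hac : Permutator T Y (a ++ c))
    (hc : c ≠ []) : Permutator T Y c := by
  refine ⟨⟨hc, fun f hf => hac.1.2 f (List.mem_append_right _ hf)⟩, ?_⟩
  have := hac.2
  rw [realize_append, Set.image_comp, ha.2] at this
  exact this

lemma flatten_ne_nil' {α : Type*} {L : List (List α)} (hL : L ≠ [])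
    (h : ∀ u ∈ L, u ≠ []) : L.flatten ≠ [] := by
  cases L with
  | nil => exact absurd rfl hL
  | cons a t =>
    simp only [List.flatten_cons, ne_eq, List.append_eq_nil_iff]
    intro ⟨h1, _⟩
    exact h a List.mem_cons_self h1
theorem minimal_permutator_factorization_unique
    (X : Type*) [Fintype X] [Nonempty X] (T : Finset (X → X)) (Y : Set X)
    (L L' : List (List (X → X))) (hL : L ≠ []) (hL' : L' ≠ [])
    (hmL : ∀ u ∈ L, MinPermutator T Y u) (hmL' : ∀ u ∈ L', MinPermutator T Y u)
    (h : L.flatten = L'.flatten) :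
    L = L' := by
  clear hL hL'
  induction L generalizing L' with
  | nil =>
    cases L' with
    | nil => rfl
    | cons b t' =>
      exfalso
      apply flatten_ne_nil' (L := b :: t') (by simp)
        (fun u hu => ((hmL' u hu).1.1.1))
      exact h.symm
  | cons a t ih =>
    cases L' with
    | nil =>
      exfalso
      apply flatten_ne_nil' (L := a :: t) (by simp)
        (fun u hu => ((hmL u hu).1.1.1))
      exact h
    | cons b t' =>
      simp only [List.flatten_cons] at h
      have hab : a = b := by
        rcases List.append_eq_append_iff.mp h with ⟨c, hc1, _⟩ | ⟨c, hc1, _⟩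
        · -- b = a ++ c
          rcases eq_or_ne c [] with rfl | hc
          · simp [hc1]
          · exfalso
            have hb := hmL' b List.mem_cons_self
            have ha := (hmL a List.mem_cons_self).1
            exact hb.2 ⟨a, c, hc1, ha, perm_of_perm_append ha (hc1 ▸ hb.1) hc⟩
        · -- a = b ++ c
          rcases eq_or_ne c [] with rfl | hc
          · simp [hc1]
          · exfalso
            have ha := hmL a List.mem_cons_self
            have hb := (hmL' b List.mem_cons_self).1
            exact ha.2 ⟨b, c, hc1, hb, perm_of_perm_append hb (hc1 ▸ ha.1) hc⟩
      subst hab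
      have ht : t.flatten = t'.flatten := by
        exact List.append_cancel_left h
      have := ih t' (fun u hu => hmL u (List.mem_cons_of_mem a hu))
        (fun u hu => hmL' u (List.mem_cons_of_mem a hu)) ht
      rw [this]
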